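/- Let X be a topological space, x ∈ X, and let H be a subset of π₁(X, x). If β is a path in X with β(0) = x and α is a loop at β(1) whose class [α] belongs to π_{[β]⁻¹H[β]}^qs(X, β(1)), where [β]⁻¹H[β] = { [β⁻¹ * h * β] | [h] ∈ H }, then [β * α * β⁻¹] ∈ π_H^qs(X, x). Consequently, the subgroup generated by all such classes [β * α * β⁻¹] equals π_H^qs(X, x) when H is a subgroup. -/

import Mathlib

open unitInterval

noncomputable section

attribute [local instance] Path.Homotopic.setoid

variable {X Y : Type*} [TopologicalSpace X] [TopologicalSpace Y]

/-- `HClose f g` : the path `f` is homotopically close to the path `g` rel `∂I`: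
for every partition `0 = t₀ < t₁ < ⋯ < tₙ = 1` and every sequence of open sets
`U₁, …, Uₙ` with `g [tᵢ₋₁, tᵢ] ⊆ Uᵢ`, there is a path `γ`, homotopic to `f` rel `∂I`,
with `γ [tᵢ₋₁, tᵢ] ⊆ Uᵢ` and `γ tᵢ = g tᵢ` for all `i`. -/
def HClose {a b : X} (f g : Path a b) : Prop :=
  ∀ (n : ℕ) (t : Fin (n + 1) → I), t 0 = 0 → t (Fin.last n) = 1 → StrictMono t →
    ∀ U : Fin n → Set X, (∀ i, IsOpen (U i)) →
      (∀ i : Fin n, g '' Set.Icc (t i.castSucc) (t i.succ) ⊆ U i) →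
      ∃ γ : Path a b,
        (∀ i : Fin n, γ '' Set.Icc (t i.castSucc) (t i.succ) ⊆ U i) ∧
        (∀ i : Fin (n + 1), γ (t i) = g (t i)) ∧ γ.Homotopic f

/-- The class of a loop at `x` as an element of the fundamental group. -/
def pathClass {x : X} (f : Path x x) : FundamentalGroup X x :=
  FundamentalGroup.fromPath ⟦f⟧

/-- The `H`-quasi-small loop set `π_H^qs(X, x)`. -/
def qsSet (x : X) (H : Set (FundamentalGroup X x)) : Set (FundamentalGroup X x) :=
  { p | ∃ f h : Path x x, pathClass f = p ∧ pathClass h ∈ H ∧ HClose f h }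

/-- The quasi-small loop group `π₁^qs(X, x)`. -/
def qs (x : X) : Set (FundamentalGroup X x) :=
  qsSet x (⊥ : Subgroup (FundamentalGroup X x))

/-- The Spanier group of `(X, x)` with respect to the cover `𝒰`. -/
def spanierCover (x : X) (𝒰 : Set (Set X)) : Subgroup (FundamentalGroup X x) :=
  Subgroup.closure { p | ∃ (y : X) (u : Path x y) (v : Path y y) (U : Set X),
    U ∈ 𝒰 ∧ Set.range v ⊆ U ∧ p = pathClass ((u.trans v).trans u.symm) }

/-- The (unbased) Spanier group `π₁^sp(X, x)`. -/
def spanierGroup (x : X) : Subgroup (FundamentalGroup X x) :=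
  ⨅ (𝒰 : Set (Set X)) (_ : ∀ U ∈ 𝒰, IsOpen U) (_ : ⋃₀ 𝒰 = Set.univ), spanierCover x 𝒰

/-- The small generated subgroup `π₁^sg(X, x)`. -/
def smallGenerated (x : X) : Subgroup (FundamentalGroup X x) :=
  Subgroup.closure { p | ∃ (y : X) (β : Path x y) (α : Path y y),
    HClose α (Path.refl y) ∧ p = pathClass ((β.trans α).trans β.symm) }

/-- `X` is homotopically path Hausdorff relative to `H ⊆ π₁(X, x)`. -/
def HPHausdorffRel (x : X) (H : Set (FundamentalGroup X x)) : Prop :=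
  ∀ (y : X) (α β : Path x y), pathClass (α.trans β.symm) ∉ H →
    ∃ (n : ℕ) (t : Fin (n + 1) → I), t 0 = 0 ∧ t (Fin.last n) = 1 ∧ StrictMono t ∧
      ∃ U : Fin n → Set X, (∀ i, IsOpen (U i)) ∧
        (∀ i : Fin n, α '' Set.Icc (t i.castSucc) (t i.succ) ⊆ U i) ∧
        ∀ γ : Path x y, (∀ i : Fin n, γ '' Set.Icc (t i.castSucc) (t i.succ) ⊆ U i) →
          (∀ i : Fin (n + 1), γ (t i) = α (t i)) → pathClass (γ.trans β.symm) ∉ H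


-- ======================= auxiliary lemmas =======================

section Aux

lemma pathClass_hom {x : X} (f : Path x x) :
    FundamentalGroup.toPath (pathClass f) = (⟦f⟧ : Path.Homotopic.Quotient x x) := rfl

lemma pathClass_eq_iff {x : X} {f g : Path x x} : pathClass f = pathClass g ↔ f.Homotopic g := by
  constructor
  · intro h
    have := congrArg FundamentalGroup.toPath h
    rw [pathClass_hom, pathClass_hom] at this
    exact Path.Homotopic.Quotient.eq.1 this
  · intro h
    unfold pathClass
    exact Path.Homotopic.Quotient.eq.2 h

lemma pathClass_eq_of_homotopic {x : X} {f g : Path x x} (h : f.Homotopic g) :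
    pathClass f = pathClass g := pathClass_eq_iff.2 h

lemma pathClass_trans {x : X} (f g : Path x x) :
    pathClass (f.trans g) = pathClass g * pathClass f := by
  rfl

lemma pathClass_symm {x : X} (f : Path x x) :
    pathClass f.symm = (pathClass f)⁻¹ := by
  rfl

lemma pathClass_refl {x : X} : pathClass (Path.refl x) = 1 := by
  rfl

lemma path_quot_comp {x y z : X} (p : Path x y) (q : Path y z) :
    (⟦p.trans q⟧ : Path.Homotopic.Quotient x z) =
      CategoryTheory.CategoryStruct.comp (obj := FundamentalGroupoid X)
        (X := FundamentalGroupoid.mk x) (Y := FundamentalGroupoid.mk y)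
        (Z := FundamentalGroupoid.mk z) ⟦p⟧ ⟦q⟧ := by
  rfl

lemma path_quot_symm {x y : X} (p : Path x y) :
    (⟦p.symm⟧ : Path.Homotopic.Quotient y x) =
      CategoryTheory.inv (X := FundamentalGroupoid.mk x) (Y := FundamentalGroupoid.mk y)
        (show FundamentalGroupoid.mk x ⟶ FundamentalGroupoid.mk y from ⟦p⟧) := by
  rw [← CategoryTheory.Groupoid.inv_eq_inv]
  rfl

lemma conj_homotopic {x y : X} (β : Path x y) (h : Path x x) :
    ((β.trans ((β.symm.trans h).trans β)).trans β.symm).Homotopic h := by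
  have key : (⟦(β.trans ((β.symm.trans h).trans β)).trans β.symm⟧ :
      Path.Homotopic.Quotient x x) = ⟦h⟧ := by
    rw [path_quot_comp, path_quot_comp, path_quot_comp, path_quot_comp, path_quot_symm]
    simp
    rfl
  exact Quotient.exact key

lemma reflTransRefl_homotopic {x : X} (h : Path x x) :
    (((Path.refl x).symm.trans h).trans (Path.refl x)).Homotopic h := by
  rw [Path.refl_symm]
  exact Path.Homotopic.trans ⟨Path.Homotopy.transRefl _⟩ ⟨Path.Homotopy.reflTrans h⟩

lemma refl_conj_homotopic {x : X} (f : Path x x) :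
    (((Path.refl x).trans f).trans (Path.refl x).symm).Homotopic f := by
  rw [Path.refl_symm]
  exact Path.Homotopic.trans ⟨Path.Homotopy.transRefl _⟩ ⟨Path.Homotopy.reflTrans f⟩

lemma trans_left {a b c : X} (g₁ : Path a b) (g₂ : Path b c) {u w : I}
    (hw : (w : ℝ) = (u : ℝ) / 2) : (g₁.trans g₂) w = g₁ u := by
  rw [Path.trans_apply]
  split_ifs with h
  · congr 1
    ext
    show 2 * (w:ℝ) = (u:ℝ)
    rw [hw]
    ring
  · exfalso
    apply h
    rw [hw]
    linarith [u.2.2]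

lemma trans_right {a b c : X} (g₁ : Path a b) (g₂ : Path b c) {u w : I}
    (hw : (w : ℝ) = ((u : ℝ) + 1) / 2) : (g₁.trans g₂) w = g₂ u := by
  rw [Path.trans_apply]
  split_ifs with h
  · have hu : (u : ℝ) = 0 := by rw [hw] at h; linarith [u.2.1]
    have e1 : (⟨2 * (w : ℝ), (mul_pos_mem_iff zero_lt_two).2 ⟨w.2.1, h⟩⟩ : I) = 1 := by
      ext; show 2 * (w:ℝ) = 1; rw [hw, hu]; ring
    have e2 : u = 0 := by ext; exact hu
    rw [e1, e2, g₁.target, g₂.source]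
  · congr 1
    ext
    show 2 * (w:ℝ) - 1 = (u:ℝ)
    rw [hw]
    ring

lemma HClose.congr {a b : X} {f f' g : Path a b} (h : HClose f g) (hf : f.Homotopic f') :
    HClose f' g := by
  intro n t h0 hl hm U hU hc
  obtain ⟨γ, h1, h2, h3⟩ := h n t h0 hl hm U hU hc
  exact ⟨γ, h1, h2, h3.trans hf⟩

lemma HClose.of_homotopic {a b : X} {f g : Path a b} (h : g.Homotopic f) : HClose f g :=
  fun _ t _ _ _ U _ hc => ⟨g, hc, fun _ => rfl, h⟩

lemma HClose.refl {a b : X} (f : Path a b) : HClose f f :=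
  HClose.of_homotopic (Path.Homotopic.refl f)

lemma HClose.symm {a b : X} {f g : Path a b} (h : HClose f g) : HClose f.symm g.symm := by
  intro n t h0 hl hm U hU hc
  have hle : ∀ i : Fin (n+1), (i : ℕ) ≤ n := fun i => Nat.lt_succ_iff.1 i.2
  set t' : Fin (n+1) → I := fun i => σ (t ⟨n - i, by omega⟩) with ht'
  set U' : Fin n → Set X := fun i => U ⟨n - 1 - i, by omega⟩ with hU'
  have hmem : ∀ i : Fin (n+1), t' i = σ (t ⟨n - i, by omega⟩) := fun _ => rfl
  have hz : t' 0 = 0 := by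
    rw [hmem]
    have : (⟨n - ((0 : Fin (n+1)) : ℕ), by omega⟩ : Fin (n+1)) = Fin.last n := by ext; simp
    rw [this, hl, symm_one]
  have hlast : t' (Fin.last n) = 1 := by
    rw [hmem]
    have : (⟨n - ((Fin.last n : Fin (n+1)) : ℕ), by omega⟩ : Fin (n+1)) = 0 := by ext; simp
    rw [this, h0, symm_zero]
  have hmono : StrictMono t' := by
    intro i j hij
    rw [hmem, hmem]
    apply symm_lt_symm.2
    apply hm
    rw [Fin.mk_lt_mk]
    have := hle i; have := hle j
    omega
  have hcov : ∀ i : Fin n, g '' Set.Icc (t' i.castSucc) (t' i.succ) ⊆ U' i := by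
    rintro i _ ⟨u, hu, rfl⟩
    rw [Set.mem_Icc] at hu
    have h2 : g (u) = g.symm (σ u) := by
      show _ = g (σ (σ u)); rw [symm_symm]
    rw [h2]
    apply hc ⟨n - 1 - i, by omega⟩
    refine ⟨σ u, ?_, rfl⟩
    rw [Set.mem_Icc]
    have hiu : t' i.castSucc ≤ u := hu.1
    have hiu2 : u ≤ t' i.succ := hu.2
    rw [hmem] at hiu hiu2
    constructor
    · have h3 := symm_le_symm.2 hiu2
      rw [symm_symm] at h3
      have he : (⟨n - (i.succ : ℕ), by omega⟩ : Fin (n+1)) =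
          (Fin.castSucc ⟨n-1-i, by omega⟩ : Fin (n+1)) := by
        ext
        simp
        omega
      rwa [he] at h3
    · have h3 := symm_le_symm.2 hiu
      rw [symm_symm] at h3
      have he : (⟨n - (i.castSucc : ℕ), by omega⟩ : Fin (n+1)) =
          (Fin.succ ⟨n-1-i, by omega⟩ : Fin (n+1)) := by
        ext
        simp
        omega
      rwa [he] at h3
  obtain ⟨γ, hg1, hg2, hg3⟩ := h n t' hz hlast hmono U' (fun i => hU _) hcov
  · refine ⟨γ.symm, ?_, ?_, ?_⟩
    · rintro i _ ⟨u, hu, rfl⟩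
      rw [Set.mem_Icc] at hu
      have : γ.symm u = γ (σ u) := rfl
      rw [this]
      have key : γ (σ u) ∈ U' ⟨n - 1 - i, by omega⟩ := by
        apply hg1 ⟨n - 1 - i, by omega⟩
        refine ⟨σ u, ?_, rfl⟩
        rw [Set.mem_Icc]
        constructor
        · show t' (Fin.castSucc ⟨n-1-i, by omega⟩) ≤ σ u
          have : t' (Fin.castSucc ⟨n-1-i, by omega⟩) = σ (t ⟨n - (n-1-(i:ℕ)), by omega⟩) := rfl
          rw [this]
          have he : (⟨n - (n-1-(i:ℕ)), by omega⟩ : Fin (n+1)) = i.succ := by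
            ext; simp; omega
          rw [he]
          exact symm_le_symm.2 hu.2
        · show σ u ≤ t' (Fin.succ ⟨n-1-i, by omega⟩)
          have : t' (Fin.succ ⟨n-1-i, by omega⟩) = σ (t ⟨n - (n-1-(i:ℕ)+1), by omega⟩) := rfl
          rw [this]
          have he : (⟨n - (n-1-(i:ℕ)+1), by omega⟩ : Fin (n+1)) = i.castSucc := by
            ext; simp; omega
          rw [he]
          exact symm_le_symm.2 hu.1
      have he2 : (⟨n - 1 - (n-1-(i:ℕ)), by omega⟩ : Fin n) = i := by
        ext; simp; omega
      rw [hU'] at key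
      simp only at key
      rwa [he2] at key
    · intro i
      have h1 : γ.symm (t i) = γ (σ (t i)) := rfl
      have h2 : g.symm (t i) = g (σ (t i)) := rfl
      have he : σ (t i) = t' ⟨n - i, by omega⟩ := by
        rw [hmem]
        congr 1
        congr 1
        ext; simp; omega
      rw [h1, h2, he]
      exact hg2 _
    · exact Nonempty.map Path.Homotopy.symm₂ hg3


set_option maxHeartbeats 1000000 in
lemma HClose.trans {a b c : X} {f₁ g₁ : Path a b} {f₂ g₂ : Path b c}
    (h₁ : HClose f₁ g₁) (h₂ : HClose f₂ g₂) : HClose (f₁.trans f₂) (g₁.trans g₂) := by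
  classical
  intro n t h0 hl hm U hU hc
  have hle : ∀ i : Fin (n+1), (i : ℕ) ≤ n := fun i => Nat.lt_succ_iff.1 i.2
  set T : ℕ → ℝ := fun i => (t ⟨min i n, Nat.lt_succ_of_le (min_le_right i n)⟩ : ℝ) with hTdef
  have hT : ∀ i : Fin (n+1), (t i : ℝ) = T i := by
    intro i
    rw [hTdef]
    congr 1
    ext
    simp [Nat.min_eq_left (hle i)]
  have hTnn : ∀ i, 0 ≤ T i := fun i => (t _).2.1
  have hTle1 : ∀ i, T i ≤ 1 := fun i => (t _).2.2
  have hT0 : T 0 = 0 := by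
    rw [hTdef]
    simp only [Nat.zero_min]
    rw [show (⟨0, Nat.lt_succ_of_le (Nat.zero_le n)⟩ : Fin (n+1)) = 0 from rfl, h0]
    rfl
  have hTn : T n = 1 := by
    rw [hTdef]
    simp only [min_self]
    rw [show (⟨n, Nat.lt_succ_of_le (le_refl n)⟩ : Fin (n+1)) = Fin.last n from rfl, hl]
    rfl
  have hmono : ∀ {p q : ℕ}, p ≤ q → q ≤ n → T p ≤ T q := by
    intro p q hpq hqn
    rw [hTdef]
    have : (⟨min p n, Nat.lt_succ_of_le (min_le_right p n)⟩ : Fin (n+1)) ≤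
        ⟨min q n, Nat.lt_succ_of_le (min_le_right q n)⟩ := by
      rw [Fin.mk_le_mk]
      omega
    exact_mod_cast hm.monotone this
  have hstrict : ∀ {p q : ℕ}, p < q → q ≤ n → T p < T q := by
    intro p q hpq hqn
    rw [hTdef]
    have : (⟨min p n, Nat.lt_succ_of_le (min_le_right p n)⟩ : Fin (n+1)) <
        ⟨min q n, Nat.lt_succ_of_le (min_le_right q n)⟩ := by
      rw [Fin.mk_lt_mk]
      omega
    exact_mod_cast hm this
  -- the splitting indices
  set j := Nat.findGreatest (fun i => T i < 1/2) n with hjdef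
  set k := Nat.findGreatest (fun i => T i ≤ 1/2) n with hkdef
  have hjP : T j < 1/2 :=
    Nat.findGreatest_spec (P := fun i => T i < 1/2) (Nat.zero_le n) (show T 0 < 1/2 by rw [hT0]; norm_num)
  have hkP : T k ≤ 1/2 :=
    Nat.findGreatest_spec (P := fun i => T i ≤ 1/2) (Nat.zero_le n) (show T 0 ≤ 1/2 by rw [hT0]; norm_num)
  have hjn : j ≤ n := Nat.findGreatest_le n
  have hkn : k ≤ n := Nat.findGreatest_le n
  have hjlt : j < n := by
    rcases Nat.lt_or_ge j n with h | h
    · exact h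
    · exfalso
      have : j = n := le_antisymm hjn h
      rw [this, hTn] at hjP
      norm_num at hjP
  have hklt : k < n := by
    rcases Nat.lt_or_ge k n with h | h
    · exact h
    · exfalso
      have : k = n := le_antisymm hkn h
      rw [this, hTn] at hkP
      norm_num at hkP
  have hj1 : 1/2 ≤ T (j+1) := by
    by_contra hcon
    exact Nat.findGreatest_is_greatest (Nat.lt_succ_self j) (by omega) (by push_neg at hcon; exact hcon)
  have hk1 : 1/2 < T (k+1) := by
    by_contra hcon
    exact Nat.findGreatest_is_greatest (Nat.lt_succ_self k) (by omega) (by push_neg at hcon; exact hcon)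
  have hjk : j ≤ k := Nat.le_findGreatest hjn (le_of_lt hjP)
  have hkj : k ≤ j + 1 := by
    by_contra hcon
    push_neg at hcon
    have h1 : T (j+1) < T k := hstrict (by omega) hkn
    linarith
  -- first partition
  set s : Fin (j+2) → I := fun i => Set.projIcc 0 1 zero_le_one (2 * T i) with hsdef
  have hs : ∀ i : Fin (j+2), (s i : ℝ) = min 1 (2 * T i) := by
    intro i
    rw [hsdef]
    simp only [Set.coe_projIcc]
    rw [max_eq_right]
    exact le_min (by norm_num) (by have := hTnn i; linarith)
  have hs0 : s 0 = 0 := by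
    ext
    rw [hs]
    show min 1 (2 * T 0) = 0
    rw [hT0]
    norm_num
  have hslast : s (Fin.last (j+1)) = 1 := by
    ext
    rw [hs]
    show min 1 (2 * T (j+1)) = 1
    rw [min_eq_left (by linarith)]
  have hsmono : StrictMono s := by
    intro p q hpq
    have hp : (p : ℕ) ≤ j := by
      have := q.2
      omega
    show (s p : ℝ) < s q
    rw [hs, hs]
    have h1 : min 1 (2 * T p) = 2 * T p := by
      rw [min_eq_right]
      have : T p ≤ T j := hmono hp (by omega)
      linarith
    rw [h1]
    apply lt_min
    · have : T p ≤ T j := hmono hp (by omega)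
      linarith
    · have : T p < T q := hstrict (by exact_mod_cast hpq) (by have := q.2; omega)
      linarith
  set V : Fin (j+1) → Set X := fun i => U ⟨i, by omega⟩ with hVdef
  have cov1 : ∀ i : Fin (j+1), g₁ '' Set.Icc (s i.castSucc) (s i.succ) ⊆ V i := by
    rintro i _ ⟨u, hu, rfl⟩
    rw [Set.mem_Icc] at hu
    have hu1 : min 1 (2 * T i) ≤ (u : ℝ) := by
      have := Subtype.coe_le_coe.2 hu.1
      rwa [hs] at this
    have hu2 : (u : ℝ) ≤ min 1 (2 * T ((i:ℕ)+1)) := by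
      have := Subtype.coe_le_coe.2 hu.2
      rwa [hs] at this
    have hij : (i : ℕ) ≤ j := by have := i.2; omega
    have hu1' : 2 * T i ≤ u := by
      rw [min_eq_right] at hu1
      · exact hu1
      · have : T i ≤ T j := hmono hij (by omega)
        linarith
    have hu2' : (u : ℝ) ≤ 2 * T ((i:ℕ)+1) := le_trans hu2 (min_le_right _ _)
    set w : I := ⟨(u:ℝ)/2, Set.mem_Icc.2 ⟨by have := u.2.1; linarith, by linarith [u.2.2]⟩⟩ with hwdef
    have : g₁ u = (g₁.trans g₂) w := (trans_left g₁ g₂ rfl).symm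
    rw [this]
    apply hc ⟨i, by omega⟩
    refine ⟨w, Set.mem_Icc.2 ⟨?_, ?_⟩, rfl⟩
    · rw [← Subtype.coe_le_coe]
      show (t _ : ℝ) ≤ (u:ℝ)/2
      rw [hT]
      simp only [Fin.coe_castSucc]
      linarith
    · rw [← Subtype.coe_le_coe]
      show (u:ℝ)/2 ≤ (t _ : ℝ)
      rw [hT]
      simp only [Fin.val_succ]
      linarith
  obtain ⟨γ₁, hA1, hB1, hC1⟩ := h₁ (j+1) s hs0 hslast hsmono V (fun i => hU _) cov1
  -- second partition
  set r : Fin (n-k+1) → I := fun i => Set.projIcc 0 1 zero_le_one (2 * T (k + i) - 1) with hrdef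
  have hr : ∀ i : Fin (n-k+1), (r i : ℝ) = max 0 (2 * T (k + i) - 1) := by
    intro i
    rw [hrdef]
    simp only [Set.coe_projIcc]
    congr 1
    rw [min_eq_right]
    have := hTle1 (k + i)
    linarith
  have hr0 : r 0 = 0 := by
    ext
    rw [hr]
    show max 0 (2 * T (k + 0) - 1) = 0
    rw [max_eq_left]
    rw [Nat.add_zero]
    linarith
  have hrlast : r (Fin.last (n-k)) = 1 := by
    ext
    rw [hr]
    show max 0 (2 * T (k + (n - k)) - 1) = 1
    rw [show k + (n - k) = n from by omega, hTn]
    norm_num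
  have hrpos : ∀ i : Fin (n-k+1), 1 ≤ (i:ℕ) → (r i : ℝ) = 2 * T (k + i) - 1 := by
    intro i hi
    rw [hr, max_eq_right]
    have : T (k+1) ≤ T (k + i) := hmono (by omega) (by have := i.2; omega)
    linarith
  have hrmono : StrictMono r := by
    intro p q hpq
    show (r p : ℝ) < r q
    have hq1 : 1 ≤ (q : ℕ) := by
      have : (p:ℕ) < q := hpq
      omega
    rw [hrpos q hq1, hr]
    have hTq : T (k+1) ≤ T (k + q) := hmono (by omega) (by have := q.2; omega)
    apply max_lt
    · linarith
    · have : T (k + p) < T (k + q) := hstrict (by have : (p:ℕ) < q := hpq; omega) (by have := q.2; omega)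
      linarith
  set W : Fin (n-k) → Set X := fun i => U ⟨k + i, by have := i.2; omega⟩ with hWdef
  have cov2 : ∀ i : Fin (n-k), g₂ '' Set.Icc (r i.castSucc) (r i.succ) ⊆ W i := by
    rintro i _ ⟨u, hu, rfl⟩
    rw [Set.mem_Icc] at hu
    have hu1 : max 0 (2 * T (k + i) - 1) ≤ (u : ℝ) := by
      have := Subtype.coe_le_coe.2 hu.1
      rwa [hr] at this
    have hu2 : (u : ℝ) ≤ 2 * T (k + ((i:ℕ)+1)) - 1 := by
      have h5 := Subtype.coe_le_coe.2 hu.2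
      rwa [hrpos i.succ (by simp)] at h5
    set w : I := ⟨((u:ℝ)+1)/2, Set.mem_Icc.2 ⟨by have := u.2.1; linarith, by linarith [u.2.2]⟩⟩ with hwdef
    have : g₂ u = (g₁.trans g₂) w := (trans_right g₁ g₂ rfl).symm
    rw [this]
    apply hc ⟨k + i, by have := i.2; omega⟩
    refine ⟨w, Set.mem_Icc.2 ⟨?_, ?_⟩, rfl⟩
    · rw [← Subtype.coe_le_coe]
      show (t _ : ℝ) ≤ ((u:ℝ)+1)/2
      rw [hT]
      simp only [Fin.coe_castSucc]
      have := le_trans (le_max_right 0 _) hu1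
      linarith
    · rw [← Subtype.coe_le_coe]
      show ((u:ℝ)+1)/2 ≤ (t _ : ℝ)
      rw [hT]
      simp only [Fin.val_succ]
      rw [show k + (i:ℕ) + 1 = k + ((i:ℕ) + 1) from by omega]
      linarith
  obtain ⟨γ₂, hA2, hB2, hC2⟩ := h₂ (n-k) r hr0 hrlast hrmono W (fun i => hU _) cov2
  refine ⟨γ₁.trans γ₂, ?_, ?_, ?_⟩
  · -- image condition
    rintro i _ ⟨w, hw, rfl⟩
    rw [Set.mem_Icc] at hw
    have hw1 : T (i:ℕ) ≤ (w:ℝ) := by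
      have := Subtype.coe_le_coe.2 hw.1
      rw [hT] at this
      simpa using this
    have hw2 : (w:ℝ) ≤ T ((i:ℕ)+1) := by
      have := Subtype.coe_le_coe.2 hw.2
      rw [hT] at this
      simpa using this
    by_cases hhalf : (w:ℝ) ≤ 1/2
    · -- left half
      have hik : (i:ℕ) ≤ k := by
        by_contra hcon
        push_neg at hcon
        have : T (k+1) ≤ T i := hmono (by omega) (by have := i.2; omega)
        linarith
      set u : I := ⟨2 * (w:ℝ), Set.mem_Icc.2 ⟨by have := w.2.1; linarith, by linarith⟩⟩ with hudef
      have hgu : (γ₁.trans γ₂) w = γ₁ u := trans_left γ₁ γ₂ (by rw [hudef]; push_cast; ring)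
      rw [hgu]
      by_cases hij : (i:ℕ) ≤ j
      · have hmem : u ∈ Set.Icc (s (Fin.castSucc ⟨i, by omega⟩)) (s (Fin.succ ⟨i, by omega⟩)) := by
          rw [Set.mem_Icc]
          constructor
          · rw [← Subtype.coe_le_coe, hs]
            show min 1 (2 * T (i:ℕ)) ≤ 2 * (w:ℝ)
            exact le_trans (min_le_right _ _) (by linarith)
          · rw [← Subtype.coe_le_coe, hs]
            show 2 * (w:ℝ) ≤ min 1 (2 * T ((i:ℕ)+1))
            exact le_min (by linarith) (by linarith)
        have h9 := hA1 ⟨i, by omega⟩ ⟨u, hmem, rfl⟩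
        have hVi : V ⟨(i:ℕ), by omega⟩ = U i := by
          show U _ = U i
          exact congrArg U (Fin.ext rfl)
        rwa [hVi] at h9
      · -- i = k = j + 1, w = 1/2
        have hieq : (i:ℕ) = j + 1 := by omega
        have hkeq : k = j + 1 := by omega
        have hTi : T (i:ℕ) = 1/2 := by
          have h5 : T (i:ℕ) ≤ 1/2 := by rw [hieq, ← hkeq]; exact hkP
          have h6 : 1/2 ≤ T (i:ℕ) := by rw [hieq]; exact hj1
          linarith
        have hweq : (w:ℝ) = 1/2 := by rw [hTi] at hw1; linarith
        have hueq : u = 1 := by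
          ext
          show 2 * (w:ℝ) = 1
          rw [hweq]; ring
        rw [hueq, γ₁.target]
        -- b ∈ U i since b = (g₁.trans g₂) (t i.castSucc)
        have hb : (g₁.trans g₂) (t i.castSucc) = b := by
          have h7 : (t i.castSucc : ℝ) = (((0:I):ℝ) + 1)/2 := by
            rw [hT]
            simp only [Fin.coe_castSucc]
            rw [hTi]
            norm_num
          rw [trans_right g₁ g₂ h7, g₂.source]
        rw [← hb]
        apply hc i
        exact ⟨t i.castSucc, Set.mem_Icc.2 ⟨le_refl _, hm.monotone (Fin.castSucc_le_succ i)⟩, rfl⟩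
    · -- right half
      push_neg at hhalf
      have hki : k ≤ (i:ℕ) := by
        by_contra hcon
        push_neg at hcon
        have : T ((i:ℕ)+1) ≤ T k := hmono (by omega) hkn
        linarith
      set u : I := ⟨2 * (w:ℝ) - 1, Set.mem_Icc.2 ⟨by linarith, by linarith [w.2.2]⟩⟩ with hudef
      have hgu : (γ₁.trans γ₂) w = γ₂ u := trans_right γ₁ γ₂ (by rw [hudef]; push_cast; ring)
      rw [hgu]
      have hmem : u ∈ Set.Icc (r (Fin.castSucc ⟨(i:ℕ) - k, by have := i.2; omega⟩))
          (r (Fin.succ ⟨(i:ℕ) - k, by have := i.2; omega⟩)) := by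
        rw [Set.mem_Icc]
        constructor
        · rw [← Subtype.coe_le_coe, hr]
          show max 0 (2 * T (k + ((i:ℕ) - k)) - 1) ≤ 2 * (w:ℝ) - 1
          rw [show k + ((i:ℕ) - k) = (i:ℕ) from by omega]
          apply max_le <;> linarith
        · rw [← Subtype.coe_le_coe, hrpos _ (by simp)]
          show 2 * (w:ℝ) - 1 ≤ 2 * T (k + (((i:ℕ) - k) + 1)) - 1
          rw [show k + (((i:ℕ) - k) + 1) = (i:ℕ) + 1 from by omega]
          linarith
      have h9 := hA2 ⟨(i:ℕ) - k, by have := i.2; omega⟩ ⟨u, hmem, rfl⟩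
      have hWi : W ⟨(i:ℕ) - k, by have := i.2; omega⟩ = U i := by
        show U _ = U i
        exact congrArg U (Fin.ext (show k + ((i:ℕ) - k) = (i:ℕ) from by omega))
      rwa [hWi] at h9
  · -- point condition
    intro i
    by_cases hhalf : (t i : ℝ) ≤ 1/2
    · have hik : (i:ℕ) ≤ k := by
        by_contra hcon
        push_neg at hcon
        have : T (k+1) ≤ T i := hmono (by omega) (hle i)
        rw [hT] at hhalf
        linarith
      have hij1 : (i:ℕ) ≤ j + 1 := by omega
      set u : I := ⟨2 * T (i:ℕ), Set.mem_Icc.2 ⟨by have := hTnn (i:ℕ); linarith, by rw [← hT]; linarith⟩⟩ with hudef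
      have harg : (t i : ℝ) = (2 * T (i:ℕ)) / 2 := by rw [hT]; ring
      have e1 : (γ₁.trans γ₂) (t i) = γ₁ u := trans_left γ₁ γ₂ harg
      have e2 : (g₁.trans g₂) (t i) = g₁ u := trans_left g₁ g₂ harg
      rw [e1, e2]
      have hus : u = s ⟨i, by omega⟩ := by
        ext
        rw [hs]
        show 2 * T (i:ℕ) = min 1 (2 * T (i:ℕ))
        rw [min_eq_right]
        rw [hT] at hhalf
        linarith
      rw [hus]
      exact hB1 _
    · push_neg at hhalf
      have hki : k + 1 ≤ (i:ℕ) := by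
        by_contra hcon
        push_neg at hcon
        have : T i ≤ T k := hmono (by omega) hkn
        rw [hT] at hhalf
        linarith
      set u : I := ⟨2 * T (i:ℕ) - 1, Set.mem_Icc.2 ⟨by rw [← hT]; linarith, by linarith [hTle1 (i:ℕ)]⟩⟩ with hudef
      have harg : (t i : ℝ) = ((2 * T (i:ℕ) - 1) + 1) / 2 := by rw [hT]; ring
      have e1 : (γ₁.trans γ₂) (t i) = γ₂ u := trans_right γ₁ γ₂ harg
      have e2 : (g₁.trans g₂) (t i) = g₂ u := trans_right g₁ g₂ harg
      rw [e1, e2]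
      have hur : u = r ⟨(i:ℕ) - k, by have := hle i; omega⟩ := by
        ext
        rw [hr]
        show 2 * T (i:ℕ) - 1 = max 0 (2 * T (k + ((i:ℕ) - k)) - 1)
        rw [show k + ((i:ℕ) - k) = (i:ℕ) from by omega]
        rw [max_eq_right]
        have : T (k+1) ≤ T i := hmono (by omega) (hle i)
        linarith
      rw [hur]
      exact hB2 _
  · exact Path.Homotopic.hcomp hC1 hC2


end Aux

/-- if `β` is a path from `x` to `y` and `α` a loop at `y` with
`[α] ∈ π_{[β]⁻¹H[β]}^qs(X, y)`, then `[β * α * β⁻¹] ∈ π_H^qs(X, x)`; consequently, for a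
subgroup `H`, the subgroup generated by all such classes equals `π_H^qs(X, x)`. -/
theorem stmt12 (x : X) :
    (∀ (H : Set (FundamentalGroup X x)) (y : X) (β : Path x y) (α : Path y y),
      pathClass α ∈ qsSet y { q | ∃ h : Path x x, pathClass h ∈ H ∧
          q = pathClass ((β.symm.trans h).trans β) } →
      pathClass ((β.trans α).trans β.symm) ∈ qsSet x H) ∧
    (∀ H : Subgroup (FundamentalGroup X x),
      (Subgroup.closure { p | ∃ (y : X) (β : Path x y) (α : Path y y),
          pathClass α ∈ qsSet y { q | ∃ h : Path x x, pathClass h ∈ H ∧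
            q = pathClass ((β.symm.trans h).trans β) } ∧
          p = pathClass ((β.trans α).trans β.symm) } :
        Set (FundamentalGroup X x)) = qsSet x ↑H) := by
  have part1 : ∀ (H : Set (FundamentalGroup X x)) (y : X) (β : Path x y) (α : Path y y),
      pathClass α ∈ qsSet y { q | ∃ h : Path x x, pathClass h ∈ H ∧
          q = pathClass ((β.symm.trans h).trans β) } →
      pathClass ((β.trans α).trans β.symm) ∈ qsSet x H := by
    intro H y β α hα
    obtain ⟨f, h', hf, hm, hcl⟩ := hα
    obtain ⟨h, hH, hh'⟩ := hm
    refine ⟨(β.trans f).trans β.symm, (β.trans h').trans β.symm, ?_, ?_, ?_⟩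
    · apply pathClass_eq_of_homotopic
      exact Path.Homotopic.hcomp
        (Path.Homotopic.hcomp (Path.Homotopic.refl β) (pathClass_eq_iff.1 hf))
        (Path.Homotopic.refl β.symm)
    · have h1 : h'.Homotopic ((β.symm.trans h).trans β) := pathClass_eq_iff.1 hh'
      have h2 : ((β.trans h').trans β.symm).Homotopic h :=
        (Path.Homotopic.hcomp (Path.Homotopic.hcomp (Path.Homotopic.refl β) h1)
          (Path.Homotopic.refl β.symm)).trans (conj_homotopic β h)
      rw [pathClass_eq_of_homotopic h2]
      exact hH
    · exact ((HClose.refl β).trans hcl).trans (HClose.refl β.symm)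
  refine ⟨part1, ?_⟩
  intro H
  set K : Subgroup (FundamentalGroup X x) :=
    { carrier := qsSet x ↑H
      one_mem' := ⟨Path.refl x, Path.refl x, pathClass_refl,
        by rw [pathClass_refl]; exact H.one_mem, HClose.refl _⟩
      mul_mem' := by
        rintro p₁ p₂ ⟨f₁, h₁, e₁, m₁, c₁⟩ ⟨f₂, h₂, e₂, m₂, c₂⟩
        exact ⟨f₂.trans f₁, h₂.trans h₁, by rw [pathClass_trans, e₁, e₂],
          by rw [pathClass_trans]; exact H.mul_mem m₁ m₂, c₂.trans c₁⟩
      inv_mem' := by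
        rintro p ⟨f, h, e, m, c⟩
        exact ⟨f.symm, h.symm, by rw [pathClass_symm, e],
          by rw [pathClass_symm]; exact H.inv_mem m, c.symm⟩ } with hKdef
  apply Set.Subset.antisymm
  · have hle : Subgroup.closure { p | ∃ (y : X) (β : Path x y) (α : Path y y),
        pathClass α ∈ qsSet y { q | ∃ h : Path x x, pathClass h ∈ (↑H : Set _) ∧
          q = pathClass ((β.symm.trans h).trans β) } ∧
        p = pathClass ((β.trans α).trans β.symm) } ≤ K := by
      rw [Subgroup.closure_le]
      rintro p ⟨y, β, α, hqs, rfl⟩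
      exact part1 ↑H y β α hqs
    exact fun p hp => hle hp
  · intro p hp
    obtain ⟨f, h, hf, hH, hcl⟩ := hp
    apply Subgroup.subset_closure
    refine ⟨x, Path.refl x, f, ?_, ?_⟩
    · exact ⟨f, h, rfl,
        ⟨h, hH, (pathClass_eq_of_homotopic (reflTransRefl_homotopic h)).symm⟩, hcl⟩
    · rw [← hf]
      exact (pathClass_eq_of_homotopic (refl_conj_homotopic f)).symm
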